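/- arXiv:2210.00914 — 6 statements merged into one kernel-verified Lean document; each statement's English description precedes it below -/
import Mathlib

section
/- Let P be a probability mass function on a finite set of real numbers S that is closed under negation, satisfying the detailed fluctuation theorem P(-σ) = e^{-σ} P(σ) for all σ ∈ S. Then the expectation of tanh(σ/2)² under P equals the expectation of tanh(σ/2) under P, i.e., ⟨tanh(Σ/2)²⟩ = ⟨tanh(Σ/2)⟩. -/
lemma tanh_key (σ : ℝ) :
    Real.exp (-σ) * (1 + Real.tanh (σ / 2)) = 1 - Real.tanh (σ / 2) := by
  rw [Real.tanh_eq_sinh_div_cosh]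
  have hc : Real.cosh (σ / 2) ≠ 0 := ne_of_gt (Real.cosh_pos _)
  field_simp
  rw [Real.cosh_add_sinh, Real.cosh_sub_sinh, ← Real.exp_add]
  ring_nf

theorem tut_tanh_identity (S : Finset ℝ) (hSym : ∀ σ ∈ S, -σ ∈ S)
    (P : ℝ → ℝ) (hP : ∀ σ ∈ S, 0 ≤ P σ) (hsum : ∑ σ ∈ S, P σ = 1)
    (hDFT : ∀ σ ∈ S, P (-σ) = Real.exp (-σ) * P σ) :
    ∑ σ ∈ S, (Real.tanh (σ / 2)) ^ 2 * P σ = ∑ σ ∈ S, Real.tanh (σ / 2) * P σ := by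
  have key : ∑ σ ∈ S, ((Real.tanh (σ / 2)) ^ 2 * P σ - Real.tanh (σ / 2) * P σ) = 0 := by
    apply Finset.sum_involution (fun σ _ => -σ)
    · intro σ hσ
      set t := Real.tanh (σ / 2) with ht
      have hneg : Real.tanh (-σ / 2) = -t := by
        rw [ht, ← Real.tanh_neg]; ring_nf
      rw [hneg, hDFT σ hσ]
      have h := tanh_key σ
      rw [← ht] at h
      linear_combination P σ * t * h
    · intro σ hσ hne
      intro h
      have hz : σ = 0 := by linarith [neg_eq_iff_add_eq_zero.mp h]
      apply hne
      simp [hz]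
    · intro σ hσ; simp
    · intro σ hσ; exact hSym σ hσ
  have hsplit := Finset.sum_sub_distrib (s := S)
    (f := fun σ => (Real.tanh (σ / 2)) ^ 2 * P σ) (g := fun σ => Real.tanh (σ / 2) * P σ)
  rw [hsplit] at key
  linarith
end

section
/- Under the fluctuation symmetry P(-σ) = e^{-σ}P(σ) on a finite symmetric set S, the expectation of Σ is nonnegative: ∑_{σ∈S} σ P(σ) ≥ 0 (the Second Law). -/
theorem second_law (S : Finset ℝ) (hSym : ∀ σ ∈ S, -σ ∈ S)
    (P : ℝ → ℝ) (hP : ∀ σ ∈ S, 0 ≤ P σ)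
    (hDFT : ∀ σ ∈ S, P (-σ) = Real.exp (-σ) * P σ) :
    0 ≤ ∑ σ ∈ S, σ * P σ := by
  have hneg : ∑ σ ∈ S, σ * P σ = ∑ σ ∈ S, (-σ) * P (-σ) := by
    refine Finset.sum_nbij' (fun σ => -σ) (fun σ => -σ) ?_ ?_ ?_ ?_ ?_ <;>
      intro σ hσ <;> simp [hSym σ hσ]
  have key : 0 ≤ ∑ σ ∈ S, σ * P σ + ∑ σ ∈ S, (-σ) * P (-σ) := by
    rw [← Finset.sum_add_distrib]
    refine Finset.sum_nonneg fun σ hσ => ?_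
    rw [hDFT σ hσ]
    have : σ * P σ + -σ * (Real.exp (-σ) * P σ) = σ * (1 - Real.exp (-σ)) * P σ := by
      ring
    rw [this]
    refine mul_nonneg ?_ (hP σ hσ)
    rcases le_or_gt 0 σ with h | h
    · have h1 : Real.exp (-σ) ≤ 1 := Real.exp_le_one_iff.mpr (by linarith)
      exact mul_nonneg h (by linarith)
    · have h1 : 1 ≤ Real.exp (-σ) := Real.one_le_exp (by linarith)
      nlinarith
  linarith [hneg ▸ key]
end

section
/- Let P satisfy P(-σ) = e^{-σ}P(σ) on a finite symmetric set S and suppose ⟨tanh(Σ/2)⟩ > 0. For any odd function j : ℝ → ℝ (a current) with ⟨j(Σ)⟩ ≠ 0, the scaled variance satisfies ⟨j²⟩/⟨j⟩² − 1 ≥ 1/⟨tanh(Σ/2)⟩ − 1, where all expectations are with respect to P. -/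
lemma tanh_half_id (σ : ℝ) :
    Real.tanh (σ/2) * (1 + Real.exp (-σ)) = 1 - Real.exp (-σ) := by
  rw [Real.tanh_eq_sinh_div_cosh, Real.sinh_eq, Real.cosh_eq]
  have h1 : Real.exp (σ/2) * Real.exp (-(σ/2)) = 1 := by
    rw [← Real.exp_add]; simp
  have h2 : Real.exp (-(σ/2)) * Real.exp (-(σ/2)) = Real.exp (-σ) := by
    rw [← Real.exp_add]; ring_nf
  have h3 : Real.exp (σ/2) * Real.exp (σ/2) = Real.exp σ := by
    rw [← Real.exp_add]; ring_nf
  have hc : (0:ℝ) < Real.exp (σ/2) + Real.exp (-(σ/2)) := by positivity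
  have h4 : Real.exp (σ/2) * Real.exp (-σ) = Real.exp (-(σ/2)) := by
    rw [← Real.exp_add]; ring_nf
  field_simp
  ring_nf
  ring_nf at h1 h2 h3 h4
  nlinarith [h1, h2, h3, h4]

lemma sum_neg_reindex (S : Finset ℝ) (hSym : ∀ σ ∈ S, -σ ∈ S) (h : ℝ → ℝ) :
    ∑ σ ∈ S, h σ = ∑ σ ∈ S, h (-σ) := by
  refine Finset.sum_nbij' (fun σ => -σ) (fun σ => -σ) ?_ ?_ ?_ ?_ ?_
  · intro a ha; exact hSym a ha
  · intro a ha; exact hSym a ha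
  · intro a _; simp
  · intro a _; simp
  · intro a _; simp

theorem thermodynamic_uncertainty_theorem (S : Finset ℝ) (hSym : ∀ σ ∈ S, -σ ∈ S)
    (P : ℝ → ℝ) (hP : ∀ σ ∈ S, 0 ≤ P σ) (hsum : ∑ σ ∈ S, P σ = 1)
    (hDFT : ∀ σ ∈ S, P (-σ) = Real.exp (-σ) * P σ)
    (htanh : 0 < ∑ σ ∈ S, Real.tanh (σ / 2) * P σ)
    (j : ℝ → ℝ) (hodd : ∀ σ, j (-σ) = -j σ)
    (hj : ∑ σ ∈ S, j σ * P σ ≠ 0) :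
    (∑ σ ∈ S, (j σ) ^ 2 * P σ) / (∑ σ ∈ S, j σ * P σ) ^ 2 - 1 ≥
      1 / (∑ σ ∈ S, Real.tanh (σ / 2) * P σ) - 1 := by
  set T := ∑ σ ∈ S, Real.tanh (σ / 2) * P σ with hT
  set J := ∑ σ ∈ S, j σ * P σ with hJ
  set Q := ∑ σ ∈ S, (j σ) ^ 2 * P σ with hQ
  set μ : ℝ → ℝ := fun σ => (P σ + P (-σ))/2 with hmu
  have hμpos : ∀ σ ∈ S, 0 ≤ μ σ := by
    intro σ hσ
    have := hP σ hσ
    have h2 : 0 ≤ P (-σ) := by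
      rw [hDFT σ hσ]; positivity
    simp only [hmu]; linarith
  -- pointwise key identity
  have hkey : ∀ σ ∈ S, Real.tanh (σ/2) * μ σ = (P σ - P (-σ))/2 := by
    intro σ hσ
    have := tanh_half_id σ
    simp only [hmu]
    rw [hDFT σ hσ]
    linear_combination (P σ / 2) * this
  -- Cauchy-Schwarz
  have cs := Finset.sum_mul_sq_le_sq_mul_sq S
      (fun σ => j σ * Real.sqrt (μ σ)) (fun σ => Real.tanh (σ/2) * Real.sqrt (μ σ))
  have hsqrt : ∀ σ ∈ S, Real.sqrt (μ σ) * Real.sqrt (μ σ) = μ σ := fun σ hσ =>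
    Real.mul_self_sqrt (hμpos σ hσ)
  -- identify the three sums
  have e1 : ∑ σ ∈ S, (j σ * Real.sqrt (μ σ)) * (Real.tanh (σ/2) * Real.sqrt (μ σ)) = J := by
    have step1 : ∑ σ ∈ S, (j σ * Real.sqrt (μ σ)) * (Real.tanh (σ/2) * Real.sqrt (μ σ))
        = ∑ σ ∈ S, j σ * ((P σ - P (-σ))/2) := by
      refine Finset.sum_congr rfl fun σ hσ => ?_
      rw [show (j σ * Real.sqrt (μ σ)) * (Real.tanh (σ/2) * Real.sqrt (μ σ))
          = j σ * (Real.tanh (σ/2) * (Real.sqrt (μ σ) * Real.sqrt (μ σ))) by ring,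
        hsqrt σ hσ, hkey σ hσ]
    rw [step1]
    have reidx : ∑ σ ∈ S, j σ * P (-σ) = -J := by
      rw [sum_neg_reindex S hSym (fun σ => j σ * P (-σ))]
      simp only [neg_neg, hodd, hJ]
      rw [← Finset.sum_neg_distrib]
      exact Finset.sum_congr rfl fun σ _ => by ring
    have : ∑ σ ∈ S, j σ * ((P σ - P (-σ))/2)
        = (∑ σ ∈ S, j σ * P σ)/2 - (∑ σ ∈ S, j σ * P (-σ))/2 := by
      rw [Finset.sum_div, Finset.sum_div, ← Finset.sum_sub_distrib]
      exact Finset.sum_congr rfl fun σ _ => by ring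
    rw [this, reidx]; rw [hJ]; ring
  have e2 : ∑ σ ∈ S, (j σ * Real.sqrt (μ σ))^2 = Q := by
    have step1 : ∑ σ ∈ S, (j σ * Real.sqrt (μ σ))^2 = ∑ σ ∈ S, (j σ)^2 * μ σ := by
      refine Finset.sum_congr rfl fun σ hσ => ?_
      rw [show (j σ * Real.sqrt (μ σ))^2 = (j σ)^2 * (Real.sqrt (μ σ) * Real.sqrt (μ σ)) by ring,
        hsqrt σ hσ]
    rw [step1]
    have reidx : ∑ σ ∈ S, (j σ)^2 * P (-σ) = Q := by
      rw [sum_neg_reindex S hSym (fun σ => (j σ)^2 * P (-σ))]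
      simp only [neg_neg, hodd, hQ]
      exact Finset.sum_congr rfl fun σ _ => by ring
    have : ∑ σ ∈ S, (j σ)^2 * μ σ
        = (∑ σ ∈ S, (j σ)^2 * P σ)/2 + (∑ σ ∈ S, (j σ)^2 * P (-σ))/2 := by
      rw [Finset.sum_div, Finset.sum_div, ← Finset.sum_add_distrib]
      exact Finset.sum_congr rfl fun σ _ => by simp only [hmu]; ring
    rw [this, reidx]; rw [hQ]; ring
  have e3 : ∑ σ ∈ S, (Real.tanh (σ/2) * Real.sqrt (μ σ))^2 = T := by
    have step1 : ∑ σ ∈ S, (Real.tanh (σ/2) * Real.sqrt (μ σ))^2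
        = ∑ σ ∈ S, Real.tanh (σ/2) * ((P σ - P (-σ))/2) := by
      refine Finset.sum_congr rfl fun σ hσ => ?_
      rw [show (Real.tanh (σ/2) * Real.sqrt (μ σ))^2
          = Real.tanh (σ/2) * (Real.tanh (σ/2) * (Real.sqrt (μ σ) * Real.sqrt (μ σ))) by ring,
        hsqrt σ hσ, hkey σ hσ]
    rw [step1]
    have reidx : ∑ σ ∈ S, Real.tanh (σ/2) * P (-σ) = -T := by
      rw [sum_neg_reindex S hSym (fun σ => Real.tanh (σ/2) * P (-σ))]
      simp only [neg_neg, hT]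
      rw [← Finset.sum_neg_distrib]
      refine Finset.sum_congr rfl fun σ _ => ?_
      rw [show (-σ)/2 = -(σ/2) by ring, Real.tanh_neg]; ring
    have : ∑ σ ∈ S, Real.tanh (σ/2) * ((P σ - P (-σ))/2)
        = (∑ σ ∈ S, Real.tanh (σ/2) * P σ)/2 - (∑ σ ∈ S, Real.tanh (σ/2) * P (-σ))/2 := by
      rw [Finset.sum_div, Finset.sum_div, ← Finset.sum_sub_distrib]
      exact Finset.sum_congr rfl fun σ _ => by ring
    rw [this, reidx]; rw [hT]; ring
  rw [e1, e2, e3] at cs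
  have hJ2 : (0:ℝ) < J^2 := by positivity
  rw [ge_iff_le, sub_le_sub_iff_right, div_le_div_iff₀ htanh hJ2]
  nlinarith [cs]
end

section
/- For all x > 0, csch²(g(x/2)) > 2/(e^x − 1), where g is the inverse function of y ↦ y·tanh(y) on [0,∞); i.e., the Timpanaro–Guarnieri–Goold–Landi bound is strictly tighter than the Hasegawa–Van Vu bound. -/
open Real Set


lemma pade (t : ℝ) (ht : 0 < t) : 2 * (Real.exp t - 1) < t * (Real.exp t + 1) := by
  set P : ℝ → ℝ := fun s => s * (Real.exp s + 1) - 2 * (Real.exp s - 1) with hP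
  have hderiv : ∀ s : ℝ, HasDerivAt P (1 * (Real.exp s + 1) + s * Real.exp s - 2 * Real.exp s) s := by
    intro s
    exact ((hasDerivAt_id s).mul ((Real.hasDerivAt_exp s).add_const 1)).sub
      (((Real.hasDerivAt_exp s).sub_const 1).const_mul 2)
  have hmono : StrictMonoOn P (Set.Ici (0:ℝ)) := by
    apply strictMonoOn_of_deriv_pos (convex_Ici 0)
    · exact (Continuous.sub ((continuous_id.mul (Real.continuous_exp.add continuous_const)))
        (continuous_const.mul (Real.continuous_exp.sub continuous_const))).continuousOn
    · intro s hs
      rw [interior_Ici] at hs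
      rw [(hderiv s).deriv]
      have h1 : (1 - s) + 1 < Real.exp (-s) + 1 := by
        have := Real.add_one_lt_exp (neg_ne_zero.mpr (Set.mem_Ioi.mp hs).ne')
        linarith
      have h2 : (1 - s) * Real.exp s < Real.exp (-s) * Real.exp s :=
        mul_lt_mul_of_pos_right (by linarith) (Real.exp_pos s)
      rw [← Real.exp_add, neg_add_cancel, Real.exp_zero] at h2
      nlinarith
  have := hmono (Set.self_mem_Ici) (Set.mem_Ici.2 (le_of_lt ht)) ht
  simp [hP] at this
  linarith

lemma main_ineq (t : ℝ) (ht : 0 < t) :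
    Real.log ((Real.exp t + Real.exp (-t)) / 2) < t * (Real.exp t - 1) / (Real.exp t + 1) := by
  set F : ℝ → ℝ := fun s => s * (Real.exp s - 1) / (Real.exp s + 1)
    - Real.log ((Real.exp s + Real.exp (-s)) / 2) with hF
  have hvne : ∀ s : ℝ, Real.exp s + 1 ≠ 0 := fun s => by positivity
  have hwpos : ∀ s : ℝ, 0 < (Real.exp s + Real.exp (-s)) / 2 := fun s => by positivity
  have hexpneg : ∀ s : ℝ, HasDerivAt (fun u : ℝ => Real.exp (-u)) (-Real.exp (-s)) s := by
    intro s
    simpa [Function.comp_def] using (Real.hasDerivAt_exp (-s)).comp s ((hasDerivAt_id s).neg)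
  have hderiv : ∀ s : ℝ, HasDerivAt F
      (((1 * (Real.exp s - 1) + s * Real.exp s) * (Real.exp s + 1)
        - s * (Real.exp s - 1) * Real.exp s) / (Real.exp s + 1) ^ 2
       - ((Real.exp s + -Real.exp (-s)) / 2) / ((Real.exp s + Real.exp (-s)) / 2)) s := by
    intro s
    have h1 : HasDerivAt (fun u : ℝ => u * (Real.exp u - 1))
        (1 * (Real.exp s - 1) + s * Real.exp s) s :=
      (hasDerivAt_id s).mul ((Real.hasDerivAt_exp s).sub_const 1)
    have h2 : HasDerivAt (fun u : ℝ => Real.exp u + 1) (Real.exp s) s :=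
      (Real.hasDerivAt_exp s).add_const 1
    have h3 := h1.div h2 (hvne s)
    have h4 : HasDerivAt (fun u : ℝ => (Real.exp u + Real.exp (-u)) / 2)
        ((Real.exp s + -Real.exp (-s)) / 2) s :=
      ((Real.hasDerivAt_exp s).add (hexpneg s)).div_const 2
    have h5 := h4.log (ne_of_gt (hwpos s))
    simpa [hF, Pi.div_def, Pi.sub_def] using h3.sub h5
  have hmono : StrictMonoOn F (Set.Ici (0:ℝ)) := by
    apply strictMonoOn_of_deriv_pos (convex_Ici 0)
    · apply ContinuousOn.sub
      · exact ((continuous_id.mul (Real.continuous_exp.sub continuous_const)).div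
          (Real.continuous_exp.add continuous_const) hvne).continuousOn
      · apply ContinuousOn.log
        · exact (((Real.continuous_exp).add (Real.continuous_exp.comp continuous_neg)).div_const 2).continuousOn
        · exact fun x _ => ne_of_gt (hwpos x)
    · intro s hs
      rw [interior_Ici] at hs
      have hs' : 0 < s := Set.mem_Ioi.mp hs
      rw [(hderiv s).deriv]
      set E := Real.exp s with hE
      have hE1 : 1 < E := by
        rw [hE]; simpa using Real.exp_lt_exp.mpr hs'
      have hEpos : 0 < E := lt_trans one_pos hE1
      have hneg : Real.exp (-s) = E⁻¹ := by rw [hE, Real.exp_neg]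
      have hp := pade s hs'
      rw [← hE] at hp
      rw [hneg]
      -- second term equals (E^2-1)/(E^2+1)
      have heq2 : ((E + -E⁻¹) / 2) / ((E + E⁻¹) / 2) = (E^2 - 1) / (E^2 + 1) := by
        rw [div_div_div_cancel_right₀]
        · field_simp
          ring
        · norm_num
      rw [heq2]
      have heq1 : (1 * (E - 1) + s * E) * (E + 1) - s * (E - 1) * E
          = E^2 - 1 + 2 * s * E := by ring
      rw [heq1]
      rw [sub_pos, div_lt_div_iff₀ (by positivity) (by positivity)]
      nlinarith [mul_lt_mul_of_pos_right hp (show (0:ℝ) < 2*E*(E^2+1) by positivity),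
        mul_nonneg (mul_nonneg (by positivity : (0:ℝ) ≤ 2*E) (le_of_lt (sub_pos.2 hE1)))
          (sq_nonneg (E - 1)), hEpos, hE1]
  have h0 : F 0 = 0 := by simp [hF]
  have := hmono (Set.self_mem_Ici) (Set.mem_Ici.2 (le_of_lt ht)) ht
  rw [h0] at this
  simp only [hF, sub_pos] at this
  exact this

theorem tggl_gt_hvv (g : ℝ → ℝ)
    (hg : ∀ x : ℝ, 0 ≤ x → 0 ≤ g x ∧ g x * Real.tanh (g x) = x) :
    ∀ x : ℝ, 0 < x → (1 / Real.sinh (g (x / 2))) ^ 2 > 2 / (Real.exp x - 1) := by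
  intro x hx
  obtain ⟨hy0, hyx⟩ := hg (x / 2) (by linarith)
  set y := g (x / 2) with hy
  have hypos : 0 < y := by
    rcases eq_or_lt_of_le hy0 with h | h
    · exfalso
      rw [← h] at hyx
      simp at hyx
      linarith
    · exact h
  have hsinh : 0 < Real.sinh y := Real.sinh_pos_iff.mpr hypos
  have hx1 : 1 < Real.exp x := by
    calc (1:ℝ) = Real.exp 0 := by simp
    _ < Real.exp x := Real.exp_lt_exp.mpr hx
  set a := Real.exp y with ha
  have hapos : 0 < a := Real.exp_pos y
  have haa : Real.exp (2 * y) = a * a := by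
    rw [two_mul, Real.exp_add]
  have htanh : Real.tanh y = (a * a - 1) / (a * a + 1) := by
    rw [Real.tanh_eq_sinh_div_cosh, Real.sinh_eq, Real.cosh_eq, Real.exp_neg, ← ha]
    rw [div_div_div_cancel_right₀]
    · field_simp
    · norm_num
  have hxe : x = 2 * y * (Real.exp (2 * y) - 1) / (Real.exp (2 * y) + 1) := by
    rw [haa]
    have h1 : y * ((a * a - 1) / (a * a + 1)) = x / 2 := by rw [← htanh]; exact hyx
    have h2 : (0:ℝ) < a * a + 1 := by positivity
    field_simp at h1 ⊢
    linarith
  have hmain := main_ineq (2 * y) (by linarith)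
  rw [← hxe] at hmain
  have hexp : (Real.exp (2 * y) + Real.exp (-(2 * y))) / 2 < Real.exp x := by
    have := Real.exp_lt_exp.mpr hmain
    rwa [Real.exp_log (by positivity)] at this
  have h2s : 2 * Real.sinh y ^ 2 = (Real.exp (2 * y) + Real.exp (-(2 * y))) / 2 - 1 := by
    rw [Real.sinh_eq, Real.exp_neg, ← ha, haa, Real.exp_neg, haa]
    field_simp
    ring
  rw [gt_iff_lt, div_pow, one_pow, div_lt_div_iff₀ (by linarith) (by positivity)]
  nlinarith [hexp, h2s]
end

section
/- For all x > 0, 2/x > csch²(g(x/2)), where g is the inverse of y ↦ y·tanh(y) on [0,∞); i.e., the Barato–Seifert bound function exceeds the TGGL bound function. -/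
theorem bs_gt_tggl (g : ℝ → ℝ)
    (hg : ∀ x : ℝ, 0 ≤ x → 0 ≤ g x ∧ g x * Real.tanh (g x) = x) :
    ∀ x : ℝ, 0 < x → 2 / x > (1 / Real.sinh (g (x / 2))) ^ 2 := by
  intro x hx
  obtain ⟨hy0, hyx⟩ := hg (x / 2) (by linarith)
  set y := g (x / 2) with hy
  have hypos : 0 < y := by
    rcases hy0.lt_or_eq with h | h
    · exact h
    · exfalso
      rw [← h] at hyx
      simp at hyx
      linarith
  have hsinh : 0 < Real.sinh y := Real.sinh_pos_iff.mpr hypos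
  have hcosh : 0 < Real.cosh y := Real.cosh_pos y
  have key : 2 * y < Real.sinh (2 * y) := Real.self_lt_sinh_iff.mpr (by linarith)
  rw [Real.sinh_two_mul] at key
  have h1 : y < Real.sinh y * Real.cosh y := by linarith
  have h2 : y * Real.tanh y < Real.sinh y ^ 2 := by
    rw [Real.tanh_eq_sinh_div_cosh]
    rw [mul_div_assoc', div_lt_iff₀ hcosh]
    nlinarith
  have hx2 : x / 2 < Real.sinh y ^ 2 := by linarith [hyx]
  rw [div_eq_mul_inv, one_div, inv_pow, gt_iff_lt]
  rw [inv_lt_iff_one_lt_mul₀ (by positivity)]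
  rw [show (2:ℝ) * x⁻¹ * Real.sinh y ^ 2 = 2 * Real.sinh y ^ 2 / x by ring, lt_div_iff₀ hx]
  nlinarith [hx2]
end

section
/- For the two-level reset: let p_E = e^{-βE}/(1 + e^{-βE}) for E > 0, β > 0, and let the entropy production take value 2βE with probability (1−p_E)², value −2βE with probability p_E², and 0 with probability 2p_E(1−p_E). Then the mean entropy production is ⟨Σ⟩ = 2βE·tanh(βE/2), and ⟨tanh(Σ/2)⟩ = tanh(βE)·tanh(βE/2), so the minimum scaled variance is 1/(tanh(βE)·tanh(βE/2)) − 1. -/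
lemma key (x : ℝ) :
    (1 - Real.exp (-x) / (1 + Real.exp (-x))) ^ 2 - (Real.exp (-x) / (1 + Real.exp (-x))) ^ 2
      = Real.tanh (x / 2) := by
  have h1 : (0:ℝ) < 1 + Real.exp (-x) := by positivity
  have h2 : (0:ℝ) < Real.exp (x/2) + Real.exp (-(x/2)) := by positivity
  rw [Real.tanh_eq_sinh_div_cosh, Real.sinh_eq, Real.cosh_eq]
  have ha : Real.exp (-x) = Real.exp (-x/2) ^ 2 := by
    rw [← Real.exp_nat_mul]; ring_nf
  have hb : Real.exp (-x/2) * Real.exp (x/2) = 1 := by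
    rw [← Real.exp_add]; ring_nf; exact Real.exp_zero
  rw [ha]
  field_simp
  rw [neg_div] at hb
  linear_combination (-2*Real.exp (-(x/2))*(1+Real.exp (-(x/2))^2)) * hb

theorem two_level_reset_moments (E β : ℝ) (hE : 0 < E) (hβ : 0 < β) :
    let p := Real.exp (-(β * E)) / (1 + Real.exp (-(β * E)))
    ((2 * β * E) * (1 - p) ^ 2 + 0 * (2 * p * (1 - p)) + (-(2 * β * E)) * p ^ 2 =
      2 * β * E * Real.tanh (β * E / 2)) ∧
    (Real.tanh (2 * β * E / 2) * (1 - p) ^ 2 + Real.tanh (0 / 2) * (2 * p * (1 - p)) +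
        Real.tanh (-(2 * β * E) / 2) * p ^ 2 = Real.tanh (β * E) * Real.tanh (β * E / 2)) ∧
    (1 / (Real.tanh (2 * β * E / 2) * (1 - p) ^ 2 + Real.tanh (0 / 2) * (2 * p * (1 - p)) +
        Real.tanh (-(2 * β * E) / 2) * p ^ 2) - 1 =
      1 / (Real.tanh (β * E) * Real.tanh (β * E / 2)) - 1) := by
  intro p
  have hk := key (β * E)
  have e1 : (2 : ℝ) * β * E / 2 = β * E := by ring
  have e2 : -(2 * β * E) / 2 = -(β * E) := by ring
  have e3 : (0:ℝ)/2 = 0 := by norm_num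
  rw [e1, e2, e3, Real.tanh_zero, Real.tanh_neg]
  have hp : (1 - p) ^ 2 - p ^ 2 = Real.tanh (β * E / 2) := hk
  refine ⟨by linear_combination (2*β*E) * hp, by linear_combination Real.tanh (β * E) * hp, ?_⟩
  have : Real.tanh (β * E) * (1 - p) ^ 2 + 0 * (2 * p * (1 - p)) + -Real.tanh (β * E) * p ^ 2
      = Real.tanh (β * E) * Real.tanh (β * E / 2) := by linear_combination Real.tanh (β * E) * hp
  rw [this]
end
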